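/- arXiv:2201.10288 — 2 statements merged into one kernel-verified Lean document; each statement's English description precedes it below -/
import Mathlib

section
/- Assume g₁, g₂, λ₁, λ₂ are all strictly positive, g₂λ₁ − λ₂g₁ ≥ 0, and −4m² < −λ₁/λ₂ < −g₁/g₂ < a < 0. Then every zero of S in the domain ℂ \ (−∞, −4m²] is real and strictly negative (it lies in (−4m², 0)), and the number of such zeros is either one or two; in particular at least one zero exists. -/
open MeasureTheory Complex Filter

/-- The half-line `(-∞, -4m²]` viewed as a subset of `ℂ`. -/
def cutSet (m : ℝ) : Set ℂ := {z : ℂ | z.im = 0 ∧ z.re ≤ -4 * m ^ 2}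

/-- The function `F_a(z) = ∫_{4m²}^∞ √(1 - 4m²/u) (1/(u+a) - 1/(u+z)) du`. -/
noncomputable def Fa (m a : ℝ) (z : ℂ) : ℂ :=
  ∫ u in Set.Ioi (4 * m ^ 2), (Real.sqrt (1 - 4 * m ^ 2 / u) : ℂ) *
    (1 / ((u : ℂ) + (a : ℂ)) - 1 / ((u : ℂ) + z))

/-- The function `S(z) = -(λ₁ + λ₂ z) κ F_a(z) - (g₁ + g₂ z)`. -/
noncomputable def Sfun (m a κ g₁ g₂ l₁ l₂ : ℝ) (z : ℂ) : ℂ :=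
  -((l₁ : ℂ) + (l₂ : ℂ) * z) * (κ : ℂ) * Fa m a z - ((g₁ : ℂ) + (g₂ : ℂ) * z)

lemma lem_lower {m : ℝ} (hm : 0 < m) {z : ℂ} (hz : z ∉ cutSet m) :
    ∃ ε > 0, ∀ u : ℝ, u ∈ Set.Ioi (4 * m ^ 2) → ε * u ≤ ‖(u : ℂ) + z‖ := by
  have hm4 : 0 < 4 * m ^ 2 := by positivity
  by_cases him : z.im = 0
  · have hre : -4 * m ^ 2 < z.re := by
      by_contra h
      exact hz ⟨him, by linarith⟩
    rcases le_or_gt 0 z.re with hx | hx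
    · refine ⟨1, one_pos, fun u hu => ?_⟩
      have hu' : 4 * m ^ 2 < u := hu
      have h1 : ((u : ℂ) + z).re = u + z.re := by simp
      have h2 : |((u : ℂ) + z).re| ≤ ‖(u : ℂ) + z‖ := Complex.abs_re_le_norm _
      rw [h1] at h2
      have : u + z.re ≤ |u + z.re| := le_abs_self _
      nlinarith
    · refine ⟨(4 * m ^ 2 + z.re) / (4 * m ^ 2), div_pos (by linarith) hm4, fun u hu => ?_⟩
      have hu' : 4 * m ^ 2 < u := hu
      have h1 : ((u : ℂ) + z).re = u + z.re := by simp
      have h2 : |((u : ℂ) + z).re| ≤ ‖(u : ℂ) + z‖ := Complex.abs_re_le_norm _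
      rw [h1] at h2
      have h3 : u + z.re ≤ |u + z.re| := le_abs_self _
      have h4 : (4 * m ^ 2 + z.re) / (4 * m ^ 2) * u ≤ u + z.re := by
        rw [div_mul_eq_mul_div, div_le_iff₀ hm4]
        nlinarith
      linarith
  · have hzn : 0 < ‖z‖ := by
      rw [norm_pos_iff]
      intro h; exact him (by simp [h])
    have hyn : 0 < |z.im| := abs_pos.2 him
    refine ⟨min (1/2) (|z.im| / (2 * ‖z‖)), by positivity, fun u hu => ?_⟩
    have hu' : 4 * m ^ 2 < u := hu
    have hu0 : 0 < u := lt_trans hm4 hu'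
    rcases le_or_gt u (2 * ‖z‖) with h | h
    · have h2 : |((u : ℂ) + z).im| ≤ ‖(u : ℂ) + z‖ := Complex.abs_im_le_norm _
      have h3 : ((u : ℂ) + z).im = z.im := by simp
      rw [h3] at h2
      have h4 : min (1/2) (|z.im| / (2 * ‖z‖)) * u ≤ |z.im| / (2 * ‖z‖) * u :=
        mul_le_mul_of_nonneg_right (min_le_right _ _) hu0.le
      have h5 : |z.im| / (2 * ‖z‖) * u ≤ |z.im| := by
        rw [div_mul_eq_mul_div, div_le_iff₀ (by positivity)]
        nlinarith
      linarith
    · have h2 : ‖(u : ℂ)‖ - ‖z‖ ≤ ‖(u : ℂ) + z‖ := by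
        have := norm_add_le ((u : ℂ) + z) (-z)
        simp only [add_neg_cancel_right, norm_neg] at this
        linarith
      have h3 : ‖(u : ℂ)‖ = u := by
        rw [Complex.norm_real, Real.norm_eq_abs, abs_of_pos hu0]
      have h4 : min (1/2) (|z.im| / (2 * ‖z‖)) * u ≤ (1/2) * u :=
        mul_le_mul_of_nonneg_right (min_le_left _ _) hu0.le
      nlinarith

lemma lem_ne {m : ℝ} (hm : 0 < m) {z : ℂ} (hz : z ∉ cutSet m) {u : ℝ}
    (hu : u ∈ Set.Ioi (4 * m ^ 2)) : (u : ℂ) + z ≠ 0 := by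
  obtain ⟨ε, hε, hb⟩ := lem_lower hm hz
  have h1 := hb u hu
  have hu0 : 0 < u := lt_trans (by positivity) hu
  intro h
  rw [h, norm_zero] at h1
  nlinarith

lemma lem_real_off {m : ℝ} {x : ℝ} (hx : -4 * m ^ 2 < x) : (x : ℂ) ∉ cutSet m := by
  intro h
  obtain ⟨-, h2⟩ := h
  simp only [Complex.ofReal_re] at h2
  linarith

lemma lem_sqrt_le_one {m u : ℝ} (hm : 0 < m) (hu : u ∈ Set.Ioi (4 * m ^ 2)) :
    Real.sqrt (1 - 4 * m ^ 2 / u) ≤ 1 := by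
  have hu0 : 0 < u := lt_trans (by positivity) hu
  have h0 : 0 ≤ 4 * m ^ 2 / u := by positivity
  exact Real.sqrt_le_one.2 (by linarith)

lemma lem_sqrt_pos {m u : ℝ} (hm : 0 < m) (hu : u ∈ Set.Ioi (4 * m ^ 2)) :
    0 < Real.sqrt (1 - 4 * m ^ 2 / u) := by
  have hu0 : 0 < u := lt_trans (by positivity) hu
  refine Real.sqrt_pos.2 ?_
  rw [sub_pos, div_lt_one hu0]
  exact hu

lemma lem_meas {m : ℝ} (hm : 0 < m) {z w : ℂ} (hz : z ∉ cutSet m) (hw : w ∉ cutSet m) :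
    ContinuousOn (fun u : ℝ => (Real.sqrt (1 - 4 * m ^ 2 / u) : ℂ) *
      (1 / ((u : ℂ) + w) - 1 / ((u : ℂ) + z))) (Set.Ioi (4 * m ^ 2)) := by
  have hc1 : ContinuousOn (fun u : ℝ => ((Real.sqrt (1 - 4 * m ^ 2 / u) : ℝ) : ℂ))
      (Set.Ioi (4 * m ^ 2)) := by
    apply Complex.continuous_ofReal.comp_continuousOn
    apply Real.continuous_sqrt.comp_continuousOn
    exact continuousOn_const.sub (continuousOn_const.div continuousOn_id
      (fun u hu => ne_of_gt (lt_trans (by positivity) hu)))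
  have hc2 : ∀ v : ℂ, v ∉ cutSet m → ContinuousOn (fun u : ℝ => 1 / ((u : ℂ) + v))
      (Set.Ioi (4 * m ^ 2)) := fun v hv =>
    continuousOn_const.div (Complex.continuous_ofReal.continuousOn.add continuousOn_const)
      (fun u hu => lem_ne hm hv hu)
  exact hc1.mul ((hc2 w hw).sub (hc2 z hz))

lemma lem_integrable {m : ℝ} (hm : 0 < m) {z w : ℂ} (hz : z ∉ cutSet m) (hw : w ∉ cutSet m) :
    IntegrableOn (fun u : ℝ => (Real.sqrt (1 - 4 * m ^ 2 / u) : ℂ) *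
      (1 / ((u : ℂ) + w) - 1 / ((u : ℂ) + z))) (Set.Ioi (4 * m ^ 2)) := by
  obtain ⟨εz, hεz, hbz⟩ := lem_lower hm hz
  obtain ⟨εw, hεw, hbw⟩ := lem_lower hm hw
  have hm4 : (0 : ℝ) < 4 * m ^ 2 := by positivity
  have hbd : IntegrableOn (fun u : ℝ => (‖z - w‖ / (εw * εz)) * u ^ (-2 : ℝ))
      (Set.Ioi (4 * m ^ 2)) := by
    exact ((integrableOn_Ioi_rpow_iff hm4).2 (by norm_num)).const_mul _
  refine Integrable.mono' hbd
    ((lem_meas hm hz hw).aestronglyMeasurable measurableSet_Ioi) ?_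
  rw [ae_restrict_iff' measurableSet_Ioi]
  filter_upwards with u hu
  have hu0 : 0 < u := lt_trans hm4 hu
  have hnz := lem_ne hm hz hu
  have hnw := lem_ne hm hw hu
  have key : 1 / ((u : ℂ) + w) - 1 / ((u : ℂ) + z) = (z - w) / (((u : ℂ) + w) * ((u : ℂ) + z)) := by
    field_simp
    ring
  rw [norm_mul, key, norm_div, norm_mul]
  have hs0 : (0 : ℝ) ≤ Real.sqrt (1 - 4 * m ^ 2 / u) := Real.sqrt_nonneg _
  have hs1 : ‖((Real.sqrt (1 - 4 * m ^ 2 / u) : ℝ) : ℂ)‖ ≤ 1 := by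
    rw [Complex.norm_real, Real.norm_eq_abs, _root_.abs_of_nonneg hs0]
    exact lem_sqrt_le_one hm hu
  have hw1 : εw * u ≤ ‖(u : ℂ) + w‖ := hbw u hu
  have hz1 : εz * u ≤ ‖(u : ℂ) + z‖ := hbz u hu
  have hwp : 0 < εw * u := by positivity
  have hzp : 0 < εz * u := by positivity
  have hmain : ‖z - w‖ / (‖(u : ℂ) + w‖ * ‖(u : ℂ) + z‖) ≤
      ‖z - w‖ / ((εw * u) * (εz * u)) := by
    apply div_le_div_of_nonneg_left (norm_nonneg _) (by positivity)
    exact mul_le_mul hw1 hz1 hzp.le (norm_nonneg _)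
  have heq : ‖z - w‖ / ((εw * u) * (εz * u)) = (‖z - w‖ / (εw * εz)) * u ^ (-2 : ℝ) := by
    rw [show (-2 : ℝ) = -(2 : ℕ) by norm_num, Real.rpow_neg hu0.le, Real.rpow_natCast]
    field_simp
  calc ‖((Real.sqrt (1 - 4 * m ^ 2 / u) : ℝ) : ℂ)‖ *
        (‖z - w‖ / (‖(u : ℂ) + w‖ * ‖(u : ℂ) + z‖))
      ≤ 1 * (‖z - w‖ / ((εw * u) * (εz * u))) := by
        apply mul_le_mul hs1 hmain (by positivity) one_pos.le
    _ = (‖z - w‖ / (εw * εz)) * u ^ (-2 : ℝ) := by rw [one_mul, heq]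

noncomputable def realFa (m a : ℝ) (x : ℝ) : ℝ :=
  ∫ u in Set.Ioi (4 * m ^ 2), Real.sqrt (1 - 4 * m ^ 2 / u) * (1 / (u + a) - 1 / (u + x))

lemma lem_Fa_real (m a x : ℝ) : Fa m a (x : ℂ) = ((realFa m a x : ℝ) : ℂ) := by
  rw [Fa, realFa]
  have h : (fun u : ℝ => (Real.sqrt (1 - 4 * m ^ 2 / u) : ℂ) *
      (1 / ((u : ℂ) + (a : ℂ)) - 1 / ((u : ℂ) + (x : ℂ))))
      = fun u : ℝ => ((Real.sqrt (1 - 4 * m ^ 2 / u) * (1 / (u + a) - 1 / (u + x)) : ℝ) : ℂ) := by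
    funext u
    push_cast
    ring
  rw [h]
  exact integral_ofReal

lemma lem_int_real {m : ℝ} (hm : 0 < m) {w x : ℝ} (hw : -4 * m ^ 2 < w) (hx : -4 * m ^ 2 < x) :
    IntegrableOn (fun u : ℝ => Real.sqrt (1 - 4 * m ^ 2 / u) * (1 / (u + w) - 1 / (u + x)))
      (Set.Ioi (4 * m ^ 2)) := by
  have h := (lem_integrable hm (lem_real_off hx) (lem_real_off hw)).re
  apply h.congr
  filter_upwards with u
  have h2 : (Real.sqrt (1 - 4 * m ^ 2 / u) : ℂ) * (1 / ((u : ℂ) + (w : ℂ)) - 1 / ((u : ℂ) + (x : ℂ)))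
      = ((Real.sqrt (1 - 4 * m ^ 2 / u) * (1 / (u + w) - 1 / (u + x)) : ℝ) : ℂ) := by
    push_cast
    ring
  simp only [RCLike.re_to_complex, h2, Complex.ofReal_re]

lemma lem_pos_diff {m : ℝ} (hm : 0 < m) {w x : ℝ} (hw : -4 * m ^ 2 < w) (hwx : w < x) :
    0 < ∫ u in Set.Ioi (4 * m ^ 2),
      Real.sqrt (1 - 4 * m ^ 2 / u) * (1 / (u + w) - 1 / (u + x)) := by
  have hx : -4 * m ^ 2 < x := lt_trans hw hwx
  have hm4 : (0 : ℝ) < 4 * m ^ 2 := by positivity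
  have hpos : ∀ u : ℝ, u ∈ Set.Ioi (4 * m ^ 2) →
      0 < Real.sqrt (1 - 4 * m ^ 2 / u) * (1 / (u + w) - 1 / (u + x)) := by
    intro u hu
    have hu' : 4 * m ^ 2 < u := hu
    have hw0 : 0 < u + w := by linarith
    have hx0 : 0 < u + x := by linarith
    have : 1 / (u + x) < 1 / (u + w) := one_div_lt_one_div_of_lt hw0 (by linarith)
    exact mul_pos (lem_sqrt_pos hm hu) (by linarith)
  have hnn : (0 : ℝ → ℝ) ≤ᵐ[volume.restrict (Set.Ioi (4 * m ^ 2))]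
      fun u : ℝ => Real.sqrt (1 - 4 * m ^ 2 / u) * (1 / (u + w) - 1 / (u + x)) :=
    (ae_restrict_iff' measurableSet_Ioi).2
      (Filter.Eventually.of_forall fun u hu => (hpos u hu).le)
  rw [setIntegral_pos_iff_support_of_nonneg_ae hnn (lem_int_real hm hw hx)]
  have hsub : Set.Ioi (4 * m ^ 2) ⊆ Function.support
      (fun u : ℝ => Real.sqrt (1 - 4 * m ^ 2 / u) * (1 / (u + w) - 1 / (u + x))) ∩
      Set.Ioi (4 * m ^ 2) := fun u hu => ⟨ne_of_gt (hpos u hu), hu⟩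
  calc (0 : ENNReal) < ⊤ := by simp
    _ = volume (Set.Ioi (4 * m ^ 2)) := (Real.volume_Ioi).symm
    _ ≤ _ := measure_mono hsub

lemma lem_mono {m a : ℝ} (hm : 0 < m) (ha : -4 * m ^ 2 < a) {w x : ℝ}
    (hw : -4 * m ^ 2 < w) (hwx : w < x) : realFa m a w < realFa m a x := by
  have hx : -4 * m ^ 2 < x := lt_trans hw hwx
  have key : realFa m a x - realFa m a w
      = ∫ u in Set.Ioi (4 * m ^ 2),
          Real.sqrt (1 - 4 * m ^ 2 / u) * (1 / (u + w) - 1 / (u + x)) := by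
    rw [realFa, realFa, ← integral_sub (lem_int_real hm ha hx) (lem_int_real hm ha hw)]
    congr 1
    funext u
    ring
  nlinarith [lem_pos_diff hm hw hwx, key]

lemma lem_Fa_a (m a : ℝ) : realFa m a a = 0 := by
  simp [realFa]

lemma lem_im {m a : ℝ} (hm : 0 < m) (ha : -4 * m ^ 2 < a) {z : ℂ} (hz : z ∉ cutSet m)
    (hy : z.im ≠ 0) : ∃ I : ℝ, 0 < I ∧ (Fa m a z).im = z.im * I := by
  have hm4 : (0 : ℝ) < 4 * m ^ 2 := by positivity
  have hint := lem_integrable hm hz (lem_real_off ha)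
  set h : ℝ → ℝ := fun u => Real.sqrt (1 - 4 * m ^ 2 / u) / Complex.normSq ((u : ℂ) + z) with hh
  have him : ∀ u : ℝ, u ∈ Set.Ioi (4 * m ^ 2) →
      ((Real.sqrt (1 - 4 * m ^ 2 / u) : ℂ) *
        (1 / ((u : ℂ) + (a : ℂ)) - 1 / ((u : ℂ) + z))).im = z.im * h u := by
    intro u hu
    have hu' : 4 * m ^ 2 < u := hu
    have ha0 : (u : ℂ) + (a : ℂ) = ((u + a : ℝ) : ℂ) := by push_cast; ring
    rw [Complex.im_ofReal_mul]
    rw [Complex.sub_im, one_div, one_div, ha0, ← Complex.ofReal_inv, Complex.ofReal_im,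
      Complex.inv_im]
    have : ((u : ℂ) + z).im = z.im := by simp
    rw [this, hh]
    field_simp
    ring
  have hFim : (Fa m a z).im = ∫ u in Set.Ioi (4 * m ^ 2), z.im * h u := by
    rw [Fa, ← RCLike.im_to_complex, ← integral_im hint]
    refine setIntegral_congr_fun measurableSet_Ioi (fun u hu => ?_)
    rw [RCLike.im_to_complex]
    exact him u hu
  have hinth : IntegrableOn h (Set.Ioi (4 * m ^ 2)) := by
    have h1 := (hint.im.const_mul (z.im)⁻¹)
    apply h1.congr
    rw [Filter.EventuallyEq, ae_restrict_iff' measurableSet_Ioi]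
    filter_upwards with u hu
    rw [RCLike.im_to_complex, him u hu]
    field_simp
  have hpos : ∀ u : ℝ, u ∈ Set.Ioi (4 * m ^ 2) → 0 < h u := by
    intro u hu
    have h1 := lem_sqrt_pos hm hu
    have h2 : 0 < Complex.normSq ((u : ℂ) + z) :=
      Complex.normSq_pos.2 (lem_ne hm hz hu)
    exact div_pos h1 h2
  have hIpos : 0 < ∫ u in Set.Ioi (4 * m ^ 2), h u := by
    have hnn : (0 : ℝ → ℝ) ≤ᵐ[volume.restrict (Set.Ioi (4 * m ^ 2))] h :=
      (ae_restrict_iff' measurableSet_Ioi).2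
        (Filter.Eventually.of_forall fun u hu => (hpos u hu).le)
    rw [setIntegral_pos_iff_support_of_nonneg_ae hnn hinth]
    have hsub : Set.Ioi (4 * m ^ 2) ⊆ Function.support h ∩ Set.Ioi (4 * m ^ 2) :=
      fun u hu => ⟨ne_of_gt (hpos u hu), hu⟩
    calc (0 : ENNReal) < ⊤ := by simp
      _ = volume (Set.Ioi (4 * m ^ 2)) := (Real.volume_Ioi).symm
      _ ≤ _ := measure_mono hsub
  refine ⟨∫ u in Set.Ioi (4 * m ^ 2), h u, hIpos, ?_⟩
  rw [hFim, integral_const_mul]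

lemma lem_cont {m a : ℝ} (hm : 0 < m) {c : ℝ} (hc : -4 * m ^ 2 < c) (hca : c ≤ a) :
    ContinuousOn (fun x : ℝ => realFa m a x) (Set.Icc c a) := by
  have hm4 : (0 : ℝ) < 4 * m ^ 2 := by positivity
  have ha : -4 * m ^ 2 < a := lt_of_lt_of_le hc hca
  obtain ⟨ε, hε, hb⟩ := lem_lower hm (lem_real_off hc)
  have hb' : ∀ u : ℝ, u ∈ Set.Ioi (4 * m ^ 2) → ε * u ≤ u + c := by
    intro u hu
    have h1 := hb u hu
    have h2 : ((u : ℂ) + (c : ℂ)) = ((u + c : ℝ) : ℂ) := by push_cast; ring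
    have hu' : 4 * m ^ 2 < u := hu
    rw [h2, Complex.norm_real, Real.norm_eq_abs,
      abs_of_pos (by linarith : (0:ℝ) < u + c)] at h1
    exact h1
  simp only [realFa]
  apply continuousOn_of_dominated (bound := fun u => ((a - c) / ε ^ 2) * u ^ (-2 : ℝ))
  · intro x hx
    exact (lem_int_real hm ha (lt_of_lt_of_le hc hx.1)).aestronglyMeasurable
  · intro x hx
    rw [ae_restrict_iff' measurableSet_Ioi]
    filter_upwards with u hu
    have hu' : 4 * m ^ 2 < u := hu
    have hu0 : 0 < u := lt_trans hm4 hu'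
    have hεu : 0 < ε * u := by positivity
    have hcu : ε * u ≤ u + c := hb' u hu
    have hau : ε * u ≤ u + a := by linarith [hca]
    have hxu : ε * u ≤ u + x := by linarith [hx.1]
    have hc0 : 0 < u + c := lt_of_lt_of_le hεu hcu
    have ha0 : 0 < u + a := lt_of_lt_of_le hεu hau
    have hx0 : 0 < u + x := lt_of_lt_of_le hεu hxu
    have key : 1 / (u + a) - 1 / (u + x) = (x - a) / ((u + a) * (u + x)) := by
      field_simp
      ring
    rw [Real.norm_eq_abs, abs_mul, key, abs_div, abs_mul,
      abs_of_pos ha0, abs_of_pos hx0]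
    have hs : |Real.sqrt (1 - 4 * m ^ 2 / u)| ≤ 1 := by
      rw [_root_.abs_of_nonneg (Real.sqrt_nonneg _)]
      exact lem_sqrt_le_one hm hu
    have hxa : |x - a| ≤ a - c := by
      rw [abs_sub_comm, _root_.abs_of_nonneg (by linarith [hx.2])]
      linarith [hx.1]
    have hdiv : |x - a| / ((u + a) * (u + x)) ≤ (a - c) / ((ε * u) * (ε * u)) :=
      div_le_div₀ (by linarith [hx.1, hx.2]) hxa (by positivity)
        (mul_le_mul hau hxu hεu.le ha0.le)
    have heq : (a - c) / ((ε * u) * (ε * u)) = ((a - c) / ε ^ 2) * u ^ (-2 : ℝ) := by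
      rw [show (-2 : ℝ) = -(2 : ℕ) by norm_num, Real.rpow_neg hu0.le, Real.rpow_natCast]
      field_simp
    calc |Real.sqrt (1 - 4 * m ^ 2 / u)| * (|x - a| / ((u + a) * (u + x)))
        ≤ 1 * ((a - c) / ((ε * u) * (ε * u))) :=
          mul_le_mul hs hdiv (by positivity) one_pos.le
      _ = ((a - c) / ε ^ 2) * u ^ (-2 : ℝ) := by rw [one_mul, heq]
  · exact ((integrableOn_Ioi_rpow_iff hm4).2 (by norm_num)).const_mul _
  · rw [ae_restrict_iff' measurableSet_Ioi]
    filter_upwards with u hu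
    have hu' : 4 * m ^ 2 < u := hu
    have hu0 : 0 < u := lt_trans hm4 hu'
    apply ContinuousOn.mul continuousOn_const
    apply ContinuousOn.sub continuousOn_const
    apply ContinuousOn.div continuousOn_const
    · exact continuousOn_const.add continuousOn_id
    · intro x hx
      have h1 := hb' u hu
      have h2 : 0 < ε * u := by positivity
      have h3 : 0 < u + c := by linarith
      have h4 : 0 < u + x := by linarith [hx.1]
      exact ne_of_gt h4

noncomputable def sR (m a κ g₁ g₂ l₁ l₂ : ℝ) (x : ℝ) : ℝ :=
  -(l₁ + l₂ * x) * κ * realFa m a x - (g₁ + g₂ * x)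

lemma lem_S_real (m a κ g₁ g₂ l₁ l₂ : ℝ) (x : ℝ) :
    Sfun m a κ g₁ g₂ l₁ l₂ (x : ℂ) = ((sR m a κ g₁ g₂ l₁ l₂ x : ℝ) : ℂ) := by
  rw [Sfun, sR, lem_Fa_real]
  push_cast
  ring

lemma lem_same {m a κ g₁ g₂ l₁ l₂ : ℝ} (hm : 0 < m) (ha : -4 * m ^ 2 < a)
    (hκ : 0 < κ) (hgl : l₂ * g₁ < g₂ * l₁) {p q : ℝ} (hp : -4 * m ^ 2 < p)
    (hpq : p < q) (hL : 0 < (l₁ + l₂ * p) * (l₁ + l₂ * q))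
    (hsp : sR m a κ g₁ g₂ l₁ l₂ p = 0) (hsq : sR m a κ g₁ g₂ l₁ l₂ q = 0) : False := by
  have hf : realFa m a p < realFa m a q := lem_mono hm ha hp hpq
  rw [sR] at hsp hsq
  have comb : (l₁ + l₂ * p) * (l₁ + l₂ * q) * (κ * (realFa m a q - realFa m a p))
      = (q - p) * (l₂ * g₁ - g₂ * l₁) := by
    linear_combination (l₁ + l₂ * q) * hsp - (l₁ + l₂ * p) * hsq
  have hLHS : 0 < (l₁ + l₂ * p) * (l₁ + l₂ * q) * (κ * (realFa m a q - realFa m a p)) :=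
    mul_pos hL (mul_pos hκ (by linarith))
  have hRHS : 0 < (q - p) * (g₂ * l₁ - l₂ * g₁) :=
    mul_pos (by linarith) (by linarith)
  nlinarith

set_option maxHeartbeats 2000000 in
theorem stmt_18 (m a lam hb κ g₁ g₂ l₁ l₂ : ℝ) (hm : 0 < m)
    (hlam : 0 < lam) (hhb : 0 < hb) (hκ : κ = lam * hb / (16 * Real.pi ^ 2))
    (hg₁ : 0 < g₁) (hg₂ : 0 < g₂) (hl₁ : 0 < l₁) (hl₂ : 0 < l₂)
    (hineq : 0 ≤ g₂ * l₁ - l₂ * g₁)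
    (h1 : -4 * m ^ 2 < -l₁ / l₂) (h2 : -l₁ / l₂ < -g₁ / g₂) (h3 : -g₁ / g₂ < a)
    (h4 : a < 0) :
    (∀ z : ℂ, z ∉ cutSet m → Sfun m a κ g₁ g₂ l₁ l₂ z = 0 →
      z.im = 0 ∧ -4 * m ^ 2 < z.re ∧ z.re < 0) ∧
    (∃ z₁ z₂ : ℂ, {z : ℂ | z ∉ cutSet m ∧ Sfun m a κ g₁ g₂ l₁ l₂ z = 0} ⊆ {z₁, z₂}) ∧
    {z : ℂ | z ∉ cutSet m ∧ Sfun m a κ g₁ g₂ l₁ l₂ z = 0}.Nonempty := by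
  classical
  have hm4 : (0 : ℝ) < 4 * m ^ 2 := by positivity
  have kpos : 0 < κ := by
    rw [hκ]
    have := Real.pi_pos
    positivity
  have hgl : l₂ * g₁ < g₂ * l₁ := by
    have h2' : g₁ / g₂ < l₁ / l₂ := by
      rw [neg_div, neg_div, neg_lt_neg_iff] at h2
      exact h2
    have := (div_lt_div_iff₀ hg₂ hl₂).1 h2'
    linarith
  have hga : 0 < g₁ + g₂ * a := by
    have := (div_lt_iff₀ hg₂).1 h3
    nlinarith
  set c : ℝ := -l₁ / l₂ with hcdef
  have hc : -4 * m ^ 2 < c := h1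
  have hca : c < a := lt_trans h2 h3
  have ha4 : -4 * m ^ 2 < a := lt_trans hc hca
  have hLc : l₁ + l₂ * c = 0 := by
    rw [hcdef]
    field_simp
    ring
  -- `sR c > 0`
  have hsc : 0 < sR m a κ g₁ g₂ l₁ l₂ c := by
    have hgc : g₁ + g₂ * c < 0 := by
      have : g₁ < g₂ * l₁ / l₂ := (lt_div_iff₀ hl₂).2 (by linarith)
      rw [hcdef]
      have e : g₂ * (-l₁ / l₂) = -(g₂ * l₁ / l₂) := by ring
      rw [e]
      linarith
    have e2 : -(l₁ + l₂ * c) * κ * realFa m a c = -(0 : ℝ) * κ * realFa m a c := by rw [hLc]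
    rw [sR, e2]
    have e3 : -(0:ℝ) * κ * realFa m a c - (g₁ + g₂ * c) = -(g₁ + g₂ * c) := by ring
    rw [e3]
    linarith
  -- `sR a < 0`
  have hsa : sR m a κ g₁ g₂ l₁ l₂ a < 0 := by
    rw [sR, lem_Fa_a]
    have e : -(l₁ + l₂ * a) * κ * 0 - (g₁ + g₂ * a) = -(g₁ + g₂ * a) := by ring
    rw [e]
    linarith
  -- Part A
  have partA : ∀ z : ℂ, z ∉ cutSet m → Sfun m a κ g₁ g₂ l₁ l₂ z = 0 →
      z.im = 0 ∧ -4 * m ^ 2 < z.re ∧ z.re < 0 := by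
    intro z hz hS
    have him : z.im = 0 := by
      by_contra hy
      obtain ⟨I, hI, hFim⟩ := lem_im hm ha4 hz hy
      have hE : ((l₁ : ℂ) + (l₂ : ℂ) * z) * (κ : ℂ) * Fa m a z = -((g₁ : ℂ) + (g₂ : ℂ) * z) := by
        rw [Sfun] at hS
        linear_combination -hS
      have hRe := congrArg Complex.re hE
      have hIm := congrArg Complex.im hE
      simp only [Complex.mul_re, Complex.mul_im, Complex.add_re, Complex.add_im,
        Complex.ofReal_re, Complex.ofReal_im, Complex.neg_re, Complex.neg_im,
        zero_mul, mul_zero, sub_zero, add_zero, zero_add] at hRe hIm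
      have key : ((l₁ + l₂ * z.re) ^ 2 + (l₂ * z.im) ^ 2) * κ * (Fa m a z).im
          = -(z.im * (g₂ * l₁ - l₂ * g₁)) := by
        linear_combination (l₁ + l₂ * z.re) * hIm - (l₂ * z.im) * hRe
      rw [hFim] at key
      have key2 : ((l₁ + l₂ * z.re) ^ 2 + (l₂ * z.im) ^ 2) * κ * (z.im ^ 2 * I)
          = -(z.im ^ 2 * (g₂ * l₁ - l₂ * g₁)) := by linear_combination z.im * key
      have hy2 : 0 < z.im ^ 2 := by
        nlinarith [abs_pos.2 hy, _root_.sq_abs z.im]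
      have hpos1 : 0 ≤ ((l₁ + l₂ * z.re) ^ 2 + (l₂ * z.im) ^ 2) * κ * (z.im ^ 2 * I) :=
        mul_nonneg (mul_nonneg (by positivity) kpos.le) (mul_nonneg (sq_nonneg _) hI.le)
      have hpos2 : 0 < z.im ^ 2 * (g₂ * l₁ - l₂ * g₁) := mul_pos hy2 (by linarith)
      linarith
    have hxre : -4 * m ^ 2 < z.re := by
      by_contra h
      exact hz ⟨him, by linarith⟩
    have hzx : z = ((z.re : ℝ) : ℂ) := by
      apply Complex.ext <;> simp [him]
    have hsR : sR m a κ g₁ g₂ l₁ l₂ z.re = 0 := by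
      rw [hzx, lem_S_real] at hS
      exact_mod_cast hS
    have hlt : z.re < 0 := by
      by_contra h
      push_neg at h
      have hf : 0 < realFa m a z.re := by
        have h5 := lem_mono hm ha4 ha4 (lt_of_lt_of_le h4 h)
        rw [lem_Fa_a] at h5
        exact h5
      rw [sR] at hsR
      have hLz : 0 < l₁ + l₂ * z.re :=
        add_pos_of_pos_of_nonneg hl₁ (mul_nonneg hl₂.le h)
      have hGz : 0 < g₁ + g₂ * z.re :=
        add_pos_of_pos_of_nonneg hg₁ (mul_nonneg hg₂.le h)
      have hP : 0 < (l₁ + l₂ * z.re) * κ * realFa m a z.re :=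
        mul_pos (mul_pos hLz kpos) hf
      nlinarith [hP, hGz, hsR]
    exact ⟨him, hxre, hlt⟩
  refine ⟨partA, ?_, ?_⟩
  -- Part B: at most two zeros
  · set Z : Set ℂ := {z : ℂ | z ∉ cutSet m ∧ Sfun m a κ g₁ g₂ l₁ l₂ z = 0} with hZdef
    have hZprop : ∀ z ∈ Z, z.im = 0 ∧ -4 * m ^ 2 < z.re ∧ z.re < 0 ∧
        sR m a κ g₁ g₂ l₁ l₂ z.re = 0 := by
      intro z hz
      obtain ⟨h5, h6, h7⟩ := partA z hz.1 hz.2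
      refine ⟨h5, h6, h7, ?_⟩
      have hzx : z = ((z.re : ℝ) : ℂ) := by
        apply Complex.ext <;> simp [h5]
      have hS := hz.2
      rw [hzx, lem_S_real] at hS
      exact_mod_cast hS
    have hnotc : ∀ z ∈ Z, z.re ≠ c := by
      intro z hz h
      have := (hZprop z hz).2.2.2
      rw [h] at this
      linarith
    have hside : ∀ z ∈ Z, ∀ w ∈ Z,
        ((z.re < c ∧ w.re < c) ∨ (c < z.re ∧ c < w.re)) → z = w := by
      intro z hz w hw hsd
      obtain ⟨hz1, hz2, hz3, hz4⟩ := hZprop z hz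
      obtain ⟨hw1, hw2, hw3, hw4⟩ := hZprop w hw
      have hre : z.re = w.re := by
        have hLL : 0 < (l₁ + l₂ * z.re) * (l₁ + l₂ * w.re) := by
          rcases hsd with ⟨ha1, ha2⟩ | ⟨ha1, ha2⟩
          · have e1 : l₁ + l₂ * z.re < 0 := by
              have := (lt_div_iff₀ hl₂).1 (show z.re < -l₁ / l₂ from ha1)
              linarith
            have e2 : l₁ + l₂ * w.re < 0 := by
              have := (lt_div_iff₀ hl₂).1 (show w.re < -l₁ / l₂ from ha2)
              linarith
            exact mul_pos_of_neg_of_neg e1 e2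
          · have e1 : 0 < l₁ + l₂ * z.re := by
              have := (div_lt_iff₀ hl₂).1 (show -l₁ / l₂ < z.re from ha1)
              linarith
            have e2 : 0 < l₁ + l₂ * w.re := by
              have := (div_lt_iff₀ hl₂).1 (show -l₁ / l₂ < w.re from ha2)
              linarith
            exact mul_pos e1 e2
        rcases lt_trichotomy z.re w.re with h | h | h
        · exact absurd (lem_same hm ha4 kpos hgl hz2 h hLL hz4 hw4) (fun f => f)
        · exact h
        · exact absurd (lem_same hm ha4 kpos hgl hw2 h
            (mul_comm (l₁ + l₂ * z.re) (l₁ + l₂ * w.re) ▸ hLL) hw4 hz4) (fun f => f)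
      apply Complex.ext hre (by rw [hz1, hw1])
    rcases em (∃ z ∈ Z, z.re < c) with ⟨zL, hzL, hzLc⟩ | hnL <;>
      rcases em (∃ z ∈ Z, c < z.re) with ⟨zR, hzR, hzRc⟩ | hnR
    · refine ⟨zL, zR, fun z hz => ?_⟩
      rcases lt_trichotomy z.re c with h | h | h
      · exact Or.inl (hside z hz zL hzL (Or.inl ⟨h, hzLc⟩))
      · exact absurd h (hnotc z hz)
      · exact Or.inr (hside z hz zR hzR (Or.inr ⟨h, hzRc⟩))
    · refine ⟨zL, zL, fun z hz => ?_⟩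
      rcases lt_trichotomy z.re c with h | h | h
      · exact Or.inl (hside z hz zL hzL (Or.inl ⟨h, hzLc⟩))
      · exact absurd h (hnotc z hz)
      · exact absurd ⟨z, hz, h⟩ hnR
    · refine ⟨zR, zR, fun z hz => ?_⟩
      rcases lt_trichotomy z.re c with h | h | h
      · exact absurd ⟨z, hz, h⟩ hnL
      · exact absurd h (hnotc z hz)
      · exact Or.inl (hside z hz zR hzR (Or.inr ⟨h, hzRc⟩))
    · refine ⟨0, 0, fun z hz => ?_⟩
      rcases lt_trichotomy z.re c with h | h | h
      · exact absurd ⟨z, hz, h⟩ hnL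
      · exact absurd h (hnotc z hz)
      · exact absurd ⟨z, hz, h⟩ hnR
  -- Part C: existence
  · have contF := lem_cont hm hc hca.le
    have contS : ContinuousOn (fun x : ℝ => sR m a κ g₁ g₂ l₁ l₂ x) (Set.Icc c a) := by
      simp only [sR]
      apply ContinuousOn.sub
      · apply ContinuousOn.mul
        · exact ((continuous_const.add (continuous_const.mul continuous_id)).neg.mul
            continuous_const).continuousOn
        · exact contF
      · exact (continuous_const.add (continuous_const.mul continuous_id)).continuousOn
    have h0mem : (0 : ℝ) ∈ Set.Icc (sR m a κ g₁ g₂ l₁ l₂ a) (sR m a κ g₁ g₂ l₁ l₂ c) :=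
      ⟨hsa.le, hsc.le⟩
    obtain ⟨x₀, hx₀, hx₀0⟩ := intermediate_value_Icc' hca.le contS h0mem
    have hx₀4 : -4 * m ^ 2 < x₀ := lt_of_lt_of_le hc hx₀.1
    refine ⟨(x₀ : ℂ), lem_real_off hx₀4, ?_⟩
    rw [lem_S_real]
    norm_cast
end

section
/- Assume λ₁ > 0, λ₂ > 0, g₂ > 0, g₁ ≤ 0, −4m² < −λ₁/λ₂ < a < 0, and 0 ≤ −g₁/λ₁ ≤ κ·F_a(0). Then every zero of S in the domain ℂ \ (−∞, −4m²] is real and lies in (−4m², 0], and the number of such zeros is either one or two; in particular at least one zero exists. -/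
open MeasureTheory Complex Filter

-- helper: real shift lower bound
lemma shift_lb {b t u : ℝ} (hb : 0 < b) (ht : -b < t) (hu : b ≤ u) :
    min 1 ((b + t) / b) * u ≤ u + t := by
  rcases le_or_gt t 0 with h | h
  · have h1 : min 1 ((b + t) / b) ≤ (b + t) / b := min_le_right _ _
    have h2 : (b + t) / b * u ≤ u + t := by
      rw [div_mul_eq_mul_div, div_le_iff₀ hb]
      nlinarith
    calc min 1 ((b + t) / b) * u ≤ (b + t) / b * u := by
          apply mul_le_mul_of_nonneg_right h1 (by linarith)
      _ ≤ u + t := h2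
  · have : min 1 ((b + t) / b) * u ≤ 1 * u :=
      mul_le_mul_of_nonneg_right (min_le_left _ _) (by linarith)
    linarith

lemma min_pos {b t : ℝ} (hb : 0 < b) (ht : -b < t) : 0 < min 1 ((b + t) / b) :=
  lt_min one_pos (div_pos (by linarith) hb)

-- complex lower bound
lemma abs_add_lb (m : ℝ) (hm : 0 < m) {z : ℂ} (hz : z ∉ cutSet m) :
    ∃ ε > 0, ∀ u : ℝ, u ∈ Set.Ioi (4 * m ^ 2) → ε * u ≤ ‖(u : ℂ) + z‖ := by
  set b := 4 * m ^ 2 with hbdef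
  have hb : 0 < b := by positivity
  by_cases him : z.im = 0
  · have hre : -b < z.re := by
      by_contra h
      exact hz ⟨him, by simpa [hbdef] using not_lt.mp h⟩
    refine ⟨min 1 ((b + z.re) / b), min_pos hb hre, fun u hu => ?_⟩
    have hu' : b ≤ u := le_of_lt hu
    calc min 1 ((b + z.re) / b) * u ≤ u + z.re := shift_lb hb hre hu'
      _ = ((u : ℂ) + z).re := by simp
      _ ≤ |((u : ℂ) + z).re| := le_abs_self _
      _ ≤ ‖(u : ℂ) + z‖ := Complex.abs_re_le_norm _
  · have habs : 0 < ‖z‖ := by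
      simp only [norm_pos_iff]
      intro h; exact him (by simp [h])
    refine ⟨min (1/2) (|z.im| / (2 * ‖z‖)), lt_min (by norm_num)
      (div_pos (abs_pos.mpr him) (by linarith)), fun u hu => ?_⟩
    have hu0 : 0 < u := lt_trans hb hu
    rcases le_or_gt u (2 * ‖z‖) with h | h
    · calc min (1/2) (|z.im| / (2 * ‖z‖)) * u
          ≤ |z.im| / (2 * ‖z‖) * u := by
            apply mul_le_mul_of_nonneg_right (min_le_right _ _) hu0.le
        _ ≤ |z.im| / (2 * ‖z‖) * (2 * ‖z‖) := by
            apply mul_le_mul_of_nonneg_left h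
            positivity
        _ = |z.im| := by field_simp
        _ = |((u : ℂ) + z).im| := by simp
        _ ≤ ‖(u : ℂ) + z‖ := Complex.abs_im_le_norm _
    · have htri : (u : ℝ) - ‖z‖ ≤ ‖(u : ℂ) + z‖ := by
        have := norm_add_le ((u : ℂ) + z) (-z)
        simp only [add_neg_cancel_right, norm_neg] at this
        have hu' : ‖(u : ℂ)‖ = u := by
          rw [Complex.norm_real, Real.norm_eq_abs, abs_of_pos hu0]
        linarith [this, hu'.le, hu'.ge]
      calc min (1/2) (|z.im| / (2 * ‖z‖)) * u ≤ 1/2 * u := by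
            apply mul_le_mul_of_nonneg_right (min_le_left _ _) hu0.le
        _ ≤ u - ‖z‖ := by linarith
        _ ≤ ‖(u : ℂ) + z‖ := htri

noncomputable def intg (m a : ℝ) (z : ℂ) (u : ℝ) : ℂ :=
  (Real.sqrt (1 - 4 * m ^ 2 / u) : ℂ) * (1 / ((u : ℂ) + (a : ℂ)) - 1 / ((u : ℂ) + z))

lemma Fa_eq (m a : ℝ) (z : ℂ) : Fa m a z = ∫ u in Set.Ioi (4 * m ^ 2), intg m a z u := rfl

lemma intg_contOn (m a : ℝ) (hm : 0 < m) (ha : -4 * m ^ 2 < a) {z : ℂ} (hz : z ∉ cutSet m) :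
    ContinuousOn (intg m a z) (Set.Ioi (4 * m ^ 2)) := by
  obtain ⟨ε, hε, hεb⟩ := abs_add_lb m hm hz
  have hb : (0:ℝ) < 4 * m ^ 2 := by positivity
  apply ContinuousOn.mul
  · apply Continuous.comp_continuousOn Complex.continuous_ofReal
    apply ContinuousOn.sqrt
    apply ContinuousOn.sub continuousOn_const
    exact ContinuousOn.div continuousOn_const continuousOn_id
      (fun u hu => ne_of_gt (lt_trans hb hu))
  · apply ContinuousOn.sub
    · apply ContinuousOn.div continuousOn_const
      · exact (Complex.continuous_ofReal.continuousOn).add continuousOn_const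
      · intro u hu
        have : (0:ℝ) < u + a := by have := lt_trans hb hu; simp only [Set.mem_Ioi] at hu; linarith
        intro h
        have : ((u:ℂ) + a).re = 0 := by rw [h]; simp
        simp only [Complex.add_re, Complex.ofReal_re] at this
        linarith
    · apply ContinuousOn.div continuousOn_const
      · exact (Complex.continuous_ofReal.continuousOn).add continuousOn_const
      · intro u hu h
        have h1 := hεb u hu
        have hu0 : (0:ℝ) < u := lt_trans hb hu
        rw [h] at h1
        simp only [norm_zero] at h1
        nlinarith

lemma intg_integrable (m a : ℝ) (hm : 0 < m) (ha : -4 * m ^ 2 < a) {z : ℂ} (hz : z ∉ cutSet m) :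
    IntegrableOn (intg m a z) (Set.Ioi (4 * m ^ 2)) := by
  obtain ⟨ε, hε, hεb⟩ := abs_add_lb m hm hz
  have hb : (0:ℝ) < 4 * m ^ 2 := by positivity
  set b := 4 * m ^ 2 with hbdef
  have ha' : -b < a := by rw [hbdef]; linarith
  set δ := min 1 ((b + a) / b) with hδdef
  have hδ : 0 < δ := min_pos hb ha'
  set C := ‖z - a‖ / (δ * ε) with hCdef
  have hC : 0 ≤ C := by positivity
  have hbound : IntegrableOn (fun u : ℝ => C * u ^ (-2 : ℝ)) (Set.Ioi b) :=
    (integrableOn_Ioi_rpow_of_lt (by norm_num) hb).const_mul C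
  apply Integrable.mono' hbound ((intg_contOn m a hm ha hz).aestronglyMeasurable measurableSet_Ioi)
  · filter_upwards [ae_restrict_mem measurableSet_Ioi] with u hu
    have hu' : b < u := hu
    have hu0 : (0:ℝ) < u := lt_trans hb hu'
    have hua : 0 < u + a := by nlinarith [shift_lb hb ha' hu'.le, mul_pos hδ hu0]
    have huz : (0:ℝ) < ‖(u:ℂ) + z‖ := lt_of_lt_of_le (mul_pos hε hu0) (hεb u hu)
    have huzne : ((u:ℂ) + z) ≠ 0 := by intro h; rw [h] at huz; simp at huz
    have huane : ((u:ℂ) + (a:ℂ)) ≠ 0 := by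
      intro h
      have : ((u:ℂ) + a).re = 0 := by rw [h]; simp
      simp only [Complex.add_re, Complex.ofReal_re] at this; linarith
    have hre : (1 / ((u : ℂ) + (a : ℂ)) - 1 / ((u : ℂ) + z)) = (z - a) / (((u:ℂ) + a) * ((u:ℂ) + z)) := by
      field_simp
      ring
    have hsq : Real.sqrt (1 - b / u) ≤ 1 := by
      rw [show (1:ℝ) = Real.sqrt 1 by simp]
      apply Real.sqrt_le_sqrt
      rw [show Real.sqrt 1 = 1 by simp, sub_le_self_iff]
      positivity
    have hnorm : ‖intg m a z u‖ = Real.sqrt (1 - b / u) *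
        (‖z - a‖ / (‖(u:ℂ) + a‖ * ‖(u:ℂ) + z‖)) := by
      rw [intg, hre]
      simp only [norm_mul, Complex.norm_real, Real.norm_eq_abs, norm_div]
      rw [hbdef, _root_.abs_of_nonneg (Real.sqrt_nonneg _)]
    rw [hnorm]
    have habsa : δ * u ≤ ‖(u:ℂ) + a‖ := by
      have : ‖(u:ℂ) + a‖ = |u + a| := by
        rw [show ((u:ℂ) + (a:ℂ)) = ((u + a : ℝ) : ℂ) by push_cast; ring, Complex.norm_real, Real.norm_eq_abs]
      rw [this, abs_of_pos hua]
      exact shift_lb hb ha' hu'.le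
    have key : ‖z - a‖ / (‖(u:ℂ) + a‖ * ‖(u:ℂ) + z‖)
        ≤ ‖z - a‖ / (δ * u * (ε * u)) := by
      apply div_le_div_of_nonneg_left (by positivity) (by positivity)
      exact mul_le_mul habsa (hεb u hu) (by positivity) (norm_nonneg _)
    calc Real.sqrt (1 - b / u) * (‖z - a‖ / (‖(u:ℂ) + a‖ * ‖(u:ℂ) + z‖))
        ≤ 1 * (‖z - a‖ / (δ * u * (ε * u))) := by
          apply mul_le_mul hsq key (by positivity) one_pos.le
      _ = C * u ^ (-2:ℝ) := by
          have hru : u ^ (-2:ℝ) = 1 / (u * u) := by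
            rw [Real.rpow_neg hu0.le, one_div]
            congr 1
            rw [show (2:ℝ) = ((2:ℕ):ℝ) by norm_num, Real.rpow_natCast]
            ring
          rw [one_mul, hru, hCdef, div_mul_div_comm, mul_one]
          congr 1
          ring

noncomputable def Freal (m a t : ℝ) : ℝ :=
  ∫ u in Set.Ioi (4 * m ^ 2), Real.sqrt (1 - 4 * m ^ 2 / u) * (1 / (u + a) - 1 / (u + t))

lemma real_notin_cut (m t : ℝ) (ht : -4 * m ^ 2 < t) : ((t : ℝ) : ℂ) ∉ cutSet m := by
  intro h
  rcases h with ⟨-, h2⟩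
  simp only [Complex.ofReal_re] at h2
  linarith

lemma Fa_ofReal (m a t : ℝ) : Fa m a ((t : ℝ) : ℂ) = ((Freal m a t : ℝ) : ℂ) := by
  rw [Fa_eq, Freal]
  have he : (fun u : ℝ => intg m a ((t:ℝ):ℂ) u) =
      fun u : ℝ => ((Real.sqrt (1 - 4 * m ^ 2 / u) * (1 / (u + a) - 1 / (u + t)) : ℝ) : ℂ) := by
    funext u
    rw [intg]
    push_cast
    ring
  rw [he]
  exact integral_ofReal

lemma Freal_integrable (m a : ℝ) (hm : 0 < m) (ha : -4 * m ^ 2 < a) {t : ℝ}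
    (ht : -4 * m ^ 2 < t) :
    IntegrableOn (fun u : ℝ => Real.sqrt (1 - 4 * m ^ 2 / u) * (1 / (u + a) - 1 / (u + t)))
      (Set.Ioi (4 * m ^ 2)) := by
  have h := intg_integrable m a hm ha (real_notin_cut m t ht)
  have h2 := h.re
  apply h2.congr
  filter_upwards with u
  have he : intg m a ((t:ℝ):ℂ) u =
      ((Real.sqrt (1 - 4 * m ^ 2 / u) * (1 / (u + a) - 1 / (u + t)) : ℝ) : ℂ) := by
    rw [intg]
    push_cast
    ring
  rw [he]
  simp only [RCLike.re_to_complex, Complex.ofReal_re]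

lemma setIntegral_pos {b : ℝ} (hb : 0 < b) {f : ℝ → ℝ} (hf : IntegrableOn f (Set.Ioi b))
    (hpos : ∀ u ∈ Set.Ioi b, 0 < f u) : 0 < ∫ u in Set.Ioi b, f u := by
  rw [setIntegral_pos_iff_support_of_nonneg_ae _ hf]
  · have hsub : Set.Ioi b ⊆ Function.support f ∩ Set.Ioi b :=
      fun u hu => ⟨(hpos u hu).ne', hu⟩
    calc (0 : ENNReal) < volume (Set.Ioi b) := by rw [Real.volume_Ioi]; simp
      _ ≤ volume (Function.support f ∩ Set.Ioi b) := measure_mono hsub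
  · filter_upwards [ae_restrict_mem measurableSet_Ioi] with u hu using (hpos u hu).le

lemma sqrt_pos_on (m : ℝ) (hm : 0 < m) {u : ℝ} (hu : 4 * m ^ 2 < u) :
    0 < Real.sqrt (1 - 4 * m ^ 2 / u) := by
  have hb : (0:ℝ) < 4 * m ^ 2 := by positivity
  have hu0 : 0 < u := lt_trans hb hu
  apply Real.sqrt_pos.mpr
  rw [sub_pos, div_lt_one hu0]
  exact hu

lemma Freal_mono (m a : ℝ) (hm : 0 < m) (ha : -4 * m ^ 2 < a) {t₁ t₂ : ℝ}
    (h₁ : -4 * m ^ 2 < t₁) (h₁₂ : t₁ < t₂) : Freal m a t₁ < Freal m a t₂ := by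
  have hb : (0:ℝ) < 4 * m ^ 2 := by positivity
  have h₂ : -4 * m ^ 2 < t₂ := lt_trans h₁ h₁₂
  have hi₁ := Freal_integrable m a hm ha h₁
  have hi₂ := Freal_integrable m a hm ha h₂
  have key : Freal m a t₂ - Freal m a t₁ =
      ∫ u in Set.Ioi (4 * m ^ 2), Real.sqrt (1 - 4 * m ^ 2 / u) * (1 / (u + t₁) - 1 / (u + t₂)) := by
    rw [Freal, Freal, ← integral_sub hi₂ hi₁]
    congr 1
    funext u
    ring
  have hpos : 0 < Freal m a t₂ - Freal m a t₁ := by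
    rw [key]
    apply setIntegral_pos hb
    · have := (hi₂.sub hi₁)
      apply this.congr
      filter_upwards with u
      simp only [Pi.sub_apply]
      ring
    · intro u hu
      simp only [Set.mem_Ioi] at hu
      have hu0 : 0 < u := lt_trans hb hu
      have h1 : 0 < u + t₁ := by linarith
      have h2 : 0 < u + t₂ := by linarith
      apply mul_pos (sqrt_pos_on m hm hu)
      rw [sub_pos]
      apply one_div_lt_one_div_of_lt h1
      linarith
  linarith

lemma Fa_im (m a : ℝ) (hm : 0 < m) (ha : -4 * m ^ 2 < a) {z : ℂ} (hzim : z.im ≠ 0) :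
    ∃ P : ℝ, 0 < P ∧ (Fa m a z).im = z.im * P := by
  have hb : (0:ℝ) < 4 * m ^ 2 := by positivity
  have hz : z ∉ cutSet m := fun h => hzim h.1
  have hint := intg_integrable m a hm ha hz
  have hzne : ∀ u : ℝ, ((u:ℂ) + z) ≠ 0 := by
    intro u h
    have : ((u:ℂ) + z).im = 0 := by rw [h]; simp
    simp only [Complex.add_im, Complex.ofReal_im, zero_add] at this
    exact hzim this
  have him : ∀ u : ℝ, (intg m a z u).im =
      z.im * (Real.sqrt (1 - 4 * m ^ 2 / u) / Complex.normSq ((u:ℂ) + z)) := by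
    intro u
    rw [intg]
    rw [show (1 / ((u:ℂ) + (a:ℝ))) = (((1 / (u + a) : ℝ)) : ℂ) by push_cast; ring]
    have hn : Complex.normSq ((u:ℂ) + z) ≠ 0 := Complex.normSq_pos.mpr (hzne u) |>.ne'
    simp only [Complex.mul_im, Complex.ofReal_re, Complex.ofReal_im, Complex.sub_im,
      Complex.sub_re, one_div, Complex.inv_im, Complex.add_im, zero_add, zero_mul,
      sub_zero, add_zero]
    field_simp
    ring
  set P := ∫ u in Set.Ioi (4 * m ^ 2), Real.sqrt (1 - 4 * m ^ 2 / u) / Complex.normSq ((u:ℂ) + z)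
    with hPdef
  have hPint : IntegrableOn (fun u : ℝ => Real.sqrt (1 - 4 * m ^ 2 / u) / Complex.normSq ((u:ℂ) + z))
      (Set.Ioi (4 * m ^ 2)) := by
    have h1 : Integrable (fun u : ℝ => (intg m a z u).im) (volume.restrict (Set.Ioi (4 * m ^ 2))) := by
      have := hint.im
      apply this.congr
      filter_upwards with u
      simp [RCLike.im_to_complex]
    have h2 := h1.const_mul (z.im)⁻¹
    apply h2.congr
    filter_upwards with u
    rw [him u]
    field_simp
  have hPpos : 0 < P := by
    apply setIntegral_pos hb hPint
    intro u hu
    apply div_pos (sqrt_pos_on m hm hu)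
    exact Complex.normSq_pos.mpr (hzne u)
  refine ⟨P, hPpos, ?_⟩
  rw [Fa_eq]
  have h3 := integral_im (𝕜 := ℂ) hint
  simp only [RCLike.im_to_complex] at h3
  rw [← h3]
  calc ∫ u in Set.Ioi (4 * m ^ 2), (intg m a z u).im
      = ∫ u in Set.Ioi (4 * m ^ 2), z.im * (Real.sqrt (1 - 4 * m ^ 2 / u) / Complex.normSq ((u:ℂ) + z)) := by
        congr 1
        funext u
        exact him u
    _ = z.im * P := by rw [hPdef, integral_const_mul]

lemma Sfun_ofReal (m a κ g₁ g₂ l₁ l₂ t : ℝ) :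
    Sfun m a κ g₁ g₂ l₁ l₂ ((t : ℝ) : ℂ) =
      (((-(l₁ + l₂ * t) * κ * Freal m a t - (g₁ + g₂ * t)) : ℝ) : ℂ) := by
  rw [Sfun, Fa_ofReal]
  push_cast
  ring

lemma Freal_self (m a : ℝ) : Freal m a a = 0 := by
  simp [Freal]

lemma Freal_contOn (m a c : ℝ) (hm : 0 < m) (hc : -4 * m ^ 2 < c) (hc0 : c < 0)
    (hca : c < a) (ha0 : a < 0) :
    ContinuousOn (fun t => Freal m a t) (Set.Icc c 0) := by
  have hb : (0:ℝ) < 4 * m ^ 2 := by positivity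
  set b := 4 * m ^ 2 with hbdef
  have ha : -b < a := by rw [hbdef]; linarith
  have hc' : -b < c := by rw [hbdef]; linarith
  set δa := min 1 ((b + a) / b) with hδa
  set δc := min 1 ((b + c) / b) with hδc
  have hδa0 : 0 < δa := min_pos hb ha
  have hδc0 : 0 < δc := min_pos hb hc'
  have hbound : IntegrableOn (fun u : ℝ => (-c) / (δa * δc) * u ^ (-2:ℝ)) (Set.Ioi b) :=
    (integrableOn_Ioi_rpow_of_lt (by norm_num) hb).const_mul _
  apply continuousOn_of_dominated (bound := fun u : ℝ => (-c) / (δa * δc) * u ^ (-2:ℝ))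
  · intro t ht
    exact (Freal_integrable m a hm (by linarith) (t := t)
      (by linarith [ht.1])).aestronglyMeasurable
  · intro t ht
    filter_upwards [ae_restrict_mem measurableSet_Ioi] with u hu
    have hu' : b < u := hu
    have hu0 : 0 < u := lt_trans hb hu'
    have hta : -b < t := by linarith [ht.1]
    have hua : δa * u ≤ u + a := shift_lb hb ha hu'.le
    have huc : δc * u ≤ u + t := by
      calc δc * u ≤ u + c := shift_lb hb hc' hu'.le
        _ ≤ u + t := by linarith [ht.1]
    have hua0 : 0 < u + a := lt_of_lt_of_le (mul_pos hδa0 hu0) hua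
    have hut0 : 0 < u + t := lt_of_lt_of_le (mul_pos hδc0 hu0) huc
    have hsq : Real.sqrt (1 - b / u) ≤ 1 := by
      rw [show (1:ℝ) = Real.sqrt 1 by simp]
      apply Real.sqrt_le_sqrt
      rw [show Real.sqrt 1 = 1 by simp, sub_le_self_iff]
      positivity
    have habs : |1 / (u + a) - 1 / (u + t)| = |t - a| / ((u + a) * (u + t)) := by
      rw [div_sub_div _ _ hua0.ne' hut0.ne', abs_div]
      congr 1
      · congr 1
        ring
      · rw [abs_of_pos (mul_pos hua0 hut0)]
    have hta' : |t - a| ≤ -c := by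
      rw [abs_le]
      constructor <;> [linarith [ht.1, ht.2]; linarith [ht.1, ht.2]]
    rw [norm_mul, Real.norm_eq_abs, Real.norm_eq_abs,
      _root_.abs_of_nonneg (Real.sqrt_nonneg _)]
    have hru : u ^ (-2:ℝ) = 1 / (u * u) := by
      rw [Real.rpow_neg hu0.le, one_div]
      congr 1
      rw [show (2:ℝ) = ((2:ℕ):ℝ) by norm_num, Real.rpow_natCast]
      ring
    calc Real.sqrt (1 - b / u) * |1 / (u + a) - 1 / (u + t)|
        ≤ 1 * (|t - a| / ((u + a) * (u + t))) := by
          rw [habs]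
          apply mul_le_mul hsq le_rfl (by positivity) one_pos.le
      _ ≤ (-c) / ((δa * u) * (δc * u)) := by
          rw [one_mul]
          exact div_le_div₀ (by linarith) hta' (by positivity)
            (mul_le_mul hua huc (by positivity) hua0.le)
      _ = (-c) / (δa * δc) * u ^ (-2:ℝ) := by
          rw [hru, div_mul_div_comm, mul_one]
          congr 1
          ring
  · exact hbound
  · filter_upwards [ae_restrict_mem measurableSet_Ioi] with u hu
    have hu' : b < u := hu
    have hu0 : 0 < u := lt_trans hb hu'
    apply ContinuousOn.mul continuousOn_const
    apply ContinuousOn.sub continuousOn_const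
    apply ContinuousOn.div continuousOn_const (continuousOn_const.add continuousOn_id)
    intro t ht
    simp only [Pi.add_apply, id]
    have : 0 < u + t := by
      have h1 := ht.1
      have : -b < c := hc'
      linarith
    linarith


set_option maxHeartbeats 1600000 in
theorem stmt_19 (m a lam hb κ g₁ g₂ l₁ l₂ : ℝ) (hm : 0 < m)
    (hlam : 0 < lam) (hhb : 0 < hb) (hκ : κ = lam * hb / (16 * Real.pi ^ 2))
    (hl₁ : 0 < l₁) (hl₂ : 0 < l₂) (hg₂ : 0 < g₂) (hg₁ : g₁ ≤ 0)
    (h1 : -4 * m ^ 2 < -l₁ / l₂) (h2 : -l₁ / l₂ < a) (h3 : a < 0)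
    (h4 : 0 ≤ -g₁ / l₁) (h5 : -g₁ / l₁ ≤ κ * (Fa m a (0 : ℂ)).re) :
    (∀ z : ℂ, z ∉ cutSet m → Sfun m a κ g₁ g₂ l₁ l₂ z = 0 →
      z.im = 0 ∧ -4 * m ^ 2 < z.re ∧ z.re ≤ 0) ∧
    (∃ z₁ z₂ : ℂ, {z : ℂ | z ∉ cutSet m ∧ Sfun m a κ g₁ g₂ l₁ l₂ z = 0} ⊆ {z₁, z₂}) ∧
    {z : ℂ | z ∉ cutSet m ∧ Sfun m a κ g₁ g₂ l₁ l₂ z = 0}.Nonempty := by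
  have hκpos : 0 < κ := by
    rw [hκ]
    have := Real.pi_pos
    positivity
  set c := -l₁ / l₂ with hcdef
  have hc0 : c < 0 := by
    rw [hcdef]
    exact div_neg_of_neg_of_pos (by linarith) hl₂
  have hbm : (0:ℝ) < 4 * m ^ 2 := by positivity
  have ha : -4 * m ^ 2 < a := lt_trans h1 h2
  have hlc : l₁ + l₂ * c = 0 := by
    rw [hcdef]
    field_simp
    ring
  -- F0 facts
  have hF0pos : 0 < Freal m a 0 := by
    have := Freal_mono m a hm ha (t₁ := a) ha h3
    rw [Freal_self] at this
    exact this
  have hFa0 : (Fa m a (0 : ℂ)).re = Freal m a 0 := by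
    rw [show (0:ℂ) = ((0:ℝ):ℂ) by norm_num, Fa_ofReal]
    simp
  have h5' : -g₁ ≤ κ * Freal m a 0 * l₁ := by
    rw [hFa0] at h5
    calc -g₁ = -g₁ / l₁ * l₁ := by field_simp
      _ ≤ κ * Freal m a 0 * l₁ := mul_le_mul_of_nonneg_right h5 hl₁.le
  -- Part 1
  have part1 : ∀ z : ℂ, z ∉ cutSet m → Sfun m a κ g₁ g₂ l₁ l₂ z = 0 →
      z.im = 0 ∧ -4 * m ^ 2 < z.re ∧ z.re ≤ 0 := by
    intro z hz hS
    have him0 : z.im = 0 := by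
      by_contra hy
      obtain ⟨P, hP, hFim⟩ := Fa_im m a hm ha hy
      rw [Sfun] at hS
      have key : ((l₁:ℂ) + l₂ * z) * κ * Fa m a z = -((g₁:ℂ) + g₂ * z) := by
        linear_combination -hS
      have hre := congrArg Complex.re key
      have him := congrArg Complex.im key
      simp only [Complex.mul_re, Complex.mul_im, Complex.add_re, Complex.add_im,
        Complex.ofReal_re, Complex.ofReal_im, Complex.neg_re, Complex.neg_im,
        zero_mul, mul_zero, add_zero, zero_add, sub_zero, zero_sub] at hre him
      rw [hFim] at hre him
      have hid : z.im * (κ * P * ((l₁ + l₂ * z.re) ^ 2 + (l₂ * z.im) ^ 2)) =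
          z.im * (g₁ * l₂ - g₂ * l₁) := by
        linear_combination (l₁ + l₂ * z.re) * him - (l₂ * z.im) * hre
      have hc2 : κ * P * ((l₁ + l₂ * z.re) ^ 2 + (l₂ * z.im) ^ 2) = g₁ * l₂ - g₂ * l₁ :=
        mul_left_cancel₀ hy hid
      have hsum : 0 < (l₁ + l₂ * z.re) ^ 2 + (l₂ * z.im) ^ 2 := by
        have h1 : l₂ * z.im ≠ 0 := mul_ne_zero hl₂.ne' hy
        have h2 : 0 < (l₂ * z.im) ^ 2 := by positivity
        nlinarith [sq_nonneg (l₁ + l₂ * z.re)]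
      have hpos : 0 < κ * P * ((l₁ + l₂ * z.re) ^ 2 + (l₂ * z.im) ^ 2) :=
        mul_pos (mul_pos hκpos hP) hsum
      have hgl : g₁ * l₂ ≤ 0 := mul_nonpos_of_nonpos_of_nonneg hg₁ hl₂.le
      have hgl2 : 0 < g₂ * l₁ := mul_pos hg₂ hl₁
      linarith
    have hzre : z = ((z.re : ℝ) : ℂ) := by
      apply Complex.ext <;> simp [him0]
    have hzgt : -4 * m ^ 2 < z.re := by
      by_contra h
      exact hz ⟨him0, not_lt.mp h⟩
    refine ⟨him0, hzgt, ?_⟩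
    by_contra hx0
    push_neg at hx0
    rw [hzre, Sfun_ofReal] at hS
    have hSr : -(l₁ + l₂ * z.re) * κ * Freal m a z.re - (g₁ + g₂ * z.re) = 0 :=
      Complex.ofReal_eq_zero.mp hS
    have hmono : Freal m a 0 < Freal m a z.re :=
      Freal_mono m a hm ha (by linarith) hx0
    nlinarith [mul_pos (mul_pos hl₂ hx0) (mul_pos hκpos (lt_trans hF0pos hmono)),
      mul_pos (mul_pos hl₁ hκpos) (sub_pos.mpr hmono), mul_pos hg₂ hx0]
  refine ⟨part1, ?_, ?_⟩
  · -- at most two zeros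
    have hZchar : ∀ z : ℂ, z ∉ cutSet m → Sfun m a κ g₁ g₂ l₁ l₂ z = 0 →
        z = ((z.re : ℝ) : ℂ) ∧ -4 * m ^ 2 < z.re ∧ z.re ≤ 0 ∧
        -(l₁ + l₂ * z.re) * κ * Freal m a z.re - (g₁ + g₂ * z.re) = 0 := by
      intro z hz hS
      obtain ⟨him0, hgt, hle⟩ := part1 z hz hS
      have hzre : z = ((z.re : ℝ) : ℂ) := by
        apply Complex.ext <;> simp [him0]
      refine ⟨hzre, hgt, hle, ?_⟩
      rw [hzre, Sfun_ofReal] at hS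
      exact Complex.ofReal_eq_zero.mp hS
    have hScpos : 0 < -(l₁ + l₂ * c) * κ * Freal m a c - (g₁ + g₂ * c) := by
      rw [hlc]
      have : 0 < -g₁ - g₂ * c := by nlinarith
      linarith [this]
    have hnec : ∀ z : ℂ, z ∉ cutSet m → Sfun m a κ g₁ g₂ l₁ l₂ z = 0 → z.re ≠ c := by
      intro z hz hS he
      obtain ⟨-, -, -, h⟩ := hZchar z hz hS
      rw [he] at h
      linarith
    have huniq : ∀ x₁ x₂ : ℝ, -4 * m ^ 2 < x₁ → x₁ < x₂ →
        0 < (l₁ + l₂ * x₁) * (l₁ + l₂ * x₂) →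
        -(l₁ + l₂ * x₁) * κ * Freal m a x₁ - (g₁ + g₂ * x₁) = 0 →
        -(l₁ + l₂ * x₂) * κ * Freal m a x₂ - (g₁ + g₂ * x₂) = 0 → False := by
      intro x₁ x₂ hx₁ h12 hD e₁ e₂
      have hmono : Freal m a x₁ < Freal m a x₂ := Freal_mono m a hm ha hx₁ h12
      have hid : (l₁ + l₂ * x₁) * (l₁ + l₂ * x₂) * (κ * (Freal m a x₂ - Freal m a x₁))
          = (x₂ - x₁) * (l₂ * g₁ - l₁ * g₂) := by
        linear_combination (-(l₁ + l₂ * x₁)) * e₂ + (l₁ + l₂ * x₂) * e₁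
      nlinarith [mul_pos hD (mul_pos hκpos (sub_pos.mpr hmono)),
        mul_pos (sub_pos.mpr h12) (show 0 < l₁ * g₂ - l₂ * g₁ by nlinarith)]
    have hget : ∀ (s : ℝ → Prop), (∀ x₁ x₂ : ℝ, s x₁ → s x₂ → True) → True := fun _ _ => trivial
    -- choose representatives
    have exuniq : ∀ (pred : ℝ → Prop),
        (∀ z w : ℂ, (z ∉ cutSet m ∧ Sfun m a κ g₁ g₂ l₁ l₂ z = 0) →
          (w ∉ cutSet m ∧ Sfun m a κ g₁ g₂ l₁ l₂ w = 0) → pred z.re → pred w.re → z = w) →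
        ∃ w : ℂ, ∀ z : ℂ, (z ∉ cutSet m ∧ Sfun m a κ g₁ g₂ l₁ l₂ z = 0) → pred z.re → z = w := by
      intro pred hp
      by_cases h : ∃ z : ℂ, (z ∉ cutSet m ∧ Sfun m a κ g₁ g₂ l₁ l₂ z = 0) ∧ pred z.re
      · obtain ⟨w, hw, hwp⟩ := h
        exact ⟨w, fun z hzm hzp => hp z w hzm hw hzp hwp⟩
      · exact ⟨0, fun z hzm hzp => absurd ⟨z, hzm, hzp⟩ h⟩
    have key : ∀ z w : ℂ, (z ∉ cutSet m ∧ Sfun m a κ g₁ g₂ l₁ l₂ z = 0) →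
        (w ∉ cutSet m ∧ Sfun m a κ g₁ g₂ l₁ l₂ w = 0) →
        ((z.re < c ∧ w.re < c) ∨ (c < z.re ∧ c < w.re)) → z = w := by
      intro z w hz hw hcase
      obtain ⟨hz1, hz2, hz3, hz4⟩ := hZchar z hz.1 hz.2
      obtain ⟨hw1, hw2, hw3, hw4⟩ := hZchar w hw.1 hw.2
      rcases lt_trichotomy z.re w.re with h'|h'|h'
      · exfalso
        apply huniq z.re w.re hz2 h' _ hz4 hw4
        rcases hcase with ⟨ha1, ha2⟩|⟨ha1, ha2⟩
        · have d1 : l₁ + l₂ * z.re < 0 := by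
            have := mul_lt_mul_of_pos_left ha1 hl₂
            linarith
          have d2 : l₁ + l₂ * w.re < 0 := by
            have := mul_lt_mul_of_pos_left ha2 hl₂
            linarith
          exact mul_pos_of_neg_of_neg d1 d2
        · have d1 : 0 < l₁ + l₂ * z.re := by
            have := mul_lt_mul_of_pos_left ha1 hl₂
            linarith
          have d2 : 0 < l₁ + l₂ * w.re := by
            have := mul_lt_mul_of_pos_left ha2 hl₂
            linarith
          exact mul_pos d1 d2
      · rw [hz1, hw1, h']
      · exfalso
        apply huniq w.re z.re hw2 h' _ hw4 hz4
        rcases hcase with ⟨ha1, ha2⟩|⟨ha1, ha2⟩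
        · have d1 : l₁ + l₂ * z.re < 0 := by
            have := mul_lt_mul_of_pos_left ha1 hl₂
            linarith
          have d2 : l₁ + l₂ * w.re < 0 := by
            have := mul_lt_mul_of_pos_left ha2 hl₂
            linarith
          exact mul_pos_of_neg_of_neg d2 d1
        · have d1 : 0 < l₁ + l₂ * z.re := by
            have := mul_lt_mul_of_pos_left ha1 hl₂
            linarith
          have d2 : 0 < l₁ + l₂ * w.re := by
            have := mul_lt_mul_of_pos_left ha2 hl₂
            linarith
          exact mul_pos d2 d1
    obtain ⟨z₁, hz₁⟩ := exuniq (fun x => x < c)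
      (fun z w hz hw hzp hwp => key z w hz hw (Or.inl ⟨hzp, hwp⟩))
    obtain ⟨z₂, hz₂⟩ := exuniq (fun x => c < x)
      (fun z w hz hw hzp hwp => key z w hz hw (Or.inr ⟨hzp, hwp⟩))
    refine ⟨z₁, z₂, fun z hzm => ?_⟩
    simp only [Set.mem_setOf_eq] at hzm
    rcases lt_trichotomy z.re c with h'|h'|h'
    · left
      exact hz₁ z hzm h'
    · exact absurd h' (hnec z hzm.1 hzm.2)
    · right
      exact hz₂ z hzm h'
  · -- existence
    have hcb : -4 * m ^ 2 < c := h1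
    have hcont : ContinuousOn
        (fun x : ℝ => -(l₁ + l₂ * x) * κ * Freal m a x - (g₁ + g₂ * x)) (Set.Icc c 0) := by
      apply ContinuousOn.sub
      · apply ContinuousOn.mul
        · apply ContinuousOn.mul _ continuousOn_const
          apply ContinuousOn.neg
          exact continuousOn_const.add (continuousOn_const.mul (continuous_id.continuousOn))
        · exact Freal_contOn m a c hm hcb hc0 h2 h3
      · exact continuousOn_const.add (continuousOn_const.mul (continuous_id.continuousOn))
    have hf0 : -(l₁ + l₂ * 0) * κ * Freal m a 0 - (g₁ + g₂ * 0) ≤ 0 := by nlinarith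
    have hfc : 0 < -(l₁ + l₂ * c) * κ * Freal m a c - (g₁ + g₂ * c) := by
      rw [hlc]
      have : 0 < -g₁ - g₂ * c := by nlinarith
      linarith
    have hsub := intermediate_value_Icc' hc0.le hcont
    have h0mem : (0:ℝ) ∈ Set.Icc (-(l₁ + l₂ * 0) * κ * Freal m a 0 - (g₁ + g₂ * 0))
        (-(l₁ + l₂ * c) * κ * Freal m a c - (g₁ + g₂ * c)) := ⟨hf0, hfc.le⟩
    obtain ⟨x, hx, hfx⟩ := hsub h0mem
    refine ⟨((x:ℝ):ℂ), ?_, ?_⟩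
    · exact real_notin_cut m x (by linarith [hx.1])
    · have hfx' : -(l₁ + l₂ * x) * κ * Freal m a x - (g₁ + g₂ * x) = 0 := hfx
      rw [Sfun_ofReal, hfx']
      norm_num
end
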